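/- There exists a hypothesis class S = {σ₀, σ₀₁} over X = ℕ and Y = {0,1}, with σ₀(x) = {0} and σ₀₁(x) = {0,1} for all x, such that for every sample size m and every γ ∈ (0,1), taking D uniform on {1,…,⌈m/γ⌉}, σ* = σ₀, and π*(·|x) = δ₀: the predictor π̂ defined by π̂(·|x) = δ₀ if x appears in the sample and δ₁ otherwise is a maximum likelihood estimator over the class of all policies supported on some σ ∈ S, and deterministically satisfies L_{D,σ*}(π̂) ≥ 1 − γ. -/
import Mathlib


open Classical in
/-- Failure of MLE over Π_S: the memorize-then-output-1 predictor is an MLE over the class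
of policies supported on some σ ∈ S = {σ₀, σ₀₁}, yet its loss is at least 1 − γ. -/
theorem stmt7 (m : ℕ) (hm : 1 ≤ m) (γ : ℝ) (hγ0 : 0 < γ) (hγ1 : γ < 1)
    (xs : Fin m → ℕ) :
    let q : ℕ := ⌈(m : ℝ) / γ⌉₊
    let D : ℕ → ℝ := fun x => if 1 ≤ x ∧ x ≤ q then 1 / (q : ℝ) else 0
    let σ0 : ℕ → Set (Fin 2) := fun _ => {0}
    let σ01 : ℕ → Set (Fin 2) := fun _ => {0, 1}
    let PiS : Set (ℕ → Fin 2 → ℝ) := {π | (∀ x y, 0 ≤ π x y) ∧ (∀ x, π x 0 + π x 1 = 1) ∧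
      ((∀ x y, π x y ≠ 0 → y ∈ σ0 x) ∨ (∀ x y, π x y ≠ 0 → y ∈ σ01 x))}
    let πhat : ℕ → Fin 2 → ℝ := fun x y =>
      if ∃ i, xs i = x then (if y = 0 then 1 else 0) else (if y = 1 then 1 else 0)
    (πhat ∈ PiS ∧ ∀ π ∈ PiS, ∏ i, π (xs i) 0 ≤ ∏ i, πhat (xs i) 0) ∧
      1 - γ ≤ ∑' x, D x * πhat x 1 := by
  intro q D σ0 σ01 PiS πhat
  have hmγ : 0 < (m : ℝ) / γ := by positivity
  have hqR : (m : ℝ) / γ ≤ q := Nat.le_ceil _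
  have hq0 : (0 : ℝ) < q := lt_of_lt_of_le hmγ hqR
  constructor
  · constructor
    · refine ⟨?_, ?_, Or.inr ?_⟩
      · intro x y
        simp only [πhat]
        split <;> split <;> norm_num
      · intro x
        simp only [πhat]
        split <;> norm_num
      · intro x y _
        fin_cases y <;> simp [σ01]
    · intro π hπ
      have h1 : ∏ i, πhat (xs i) 0 = 1 := by
        apply Finset.prod_eq_one
        intro i _
        simp only [πhat, if_pos (⟨i, rfl⟩ : ∃ j, xs j = xs i)]
        norm_num
      rw [h1]
      apply Finset.prod_le_one
      · intro i _; exact hπ.1 _ _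
      · intro i _
        have h2 := hπ.2.1 (xs i)
        have h3 := hπ.1 (xs i) 1
        linarith
  · have hsupp : ∀ x ∉ Finset.Icc 1 q, D x * πhat x 1 = 0 := by
      intro x hx
      simp only [Finset.mem_Icc, not_and_or, not_le] at hx
      have : ¬(1 ≤ x ∧ x ≤ q) := by omega
      simp [D, this]
    rw [tsum_eq_sum hsupp]
    set T : Finset ℕ := (Finset.Icc 1 q).filter (fun x => ¬∃ i, xs i = x) with hT
    have hTsub : T ⊆ Finset.Icc 1 q := Finset.filter_subset _ _
    have hval : ∀ x ∈ T, D x * πhat x 1 = 1 / (q : ℝ) := by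
      intro x hx
      rw [hT, Finset.mem_filter, Finset.mem_Icc] at hx
      simp [D, πhat, hx.1.1, hx.1.2, hx.2]
    have hle : ∑ x ∈ T, D x * πhat x 1 ≤ ∑ x ∈ Finset.Icc 1 q, D x * πhat x 1 := by
      apply Finset.sum_le_sum_of_subset_of_nonneg hTsub
      intro x _ _
      simp only [D, πhat]
      split <;> split <;> positivity
    have hsumT : ∑ x ∈ T, D x * πhat x 1 = T.card * (1 / (q : ℝ)) := by
      rw [Finset.sum_congr rfl hval, Finset.sum_const, nsmul_eq_mul]
    have hcard : q - m ≤ T.card := by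
      have hsplit : ((Finset.Icc 1 q).filter (fun x => ∃ i, xs i = x)).card + T.card
          = (Finset.Icc 1 q).card := by
        rw [hT, Finset.card_filter_add_card_filter_not]
      have hIcc : (Finset.Icc 1 q).card = q := by simp
      have hsub2 : (Finset.Icc 1 q).filter (fun x => ∃ i, xs i = x)
          ⊆ Finset.image xs Finset.univ := by
        intro x hx
        rw [Finset.mem_filter] at hx
        obtain ⟨i, hi⟩ := hx.2
        exact Finset.mem_image.mpr ⟨i, Finset.mem_univ i, hi⟩
      have h4 : ((Finset.Icc 1 q).filter (fun x => ∃ i, xs i = x)).card ≤ m := by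
        calc _ ≤ (Finset.image xs Finset.univ).card := Finset.card_le_card hsub2
          _ ≤ (Finset.univ : Finset (Fin m)).card := Finset.card_image_le
          _ = m := by simp
      omega
    have hmq : (m : ℝ) ≤ γ * q := by
      rw [div_le_iff₀ hγ0] at hqR
      linarith
    have hcardR : (q : ℝ) - m ≤ T.card := by
      have h5 : q ≤ T.card + m := by omega
      have h6 : (q : ℝ) ≤ T.card + m := by exact_mod_cast h5
      linarith
    calc 1 - γ ≤ ((q : ℝ) - m) / q := by
          rw [le_div_iff₀ hq0]; nlinarith
      _ ≤ T.card * (1 / (q : ℝ)) := by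
          rw [div_eq_mul_one_div]
          exact mul_le_mul_of_nonneg_right hcardR (by positivity)
      _ = ∑ x ∈ T, D x * πhat x 1 := hsumT.symm
      _ ≤ _ := hle
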